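/- Define h(n,k) = Σ_{j∈ℤ} q^{2j²−j} [⌊n/2⌋ choose k+j]_q [⌈n/2⌉ choose k+1−j]_q. Then h(n,k) = [n choose 2k+1]_q for all n ≥ 0 and all k. -/

import Mathlib

open LaurentPolynomial

/-- The Gaussian (q-)binomial coefficient `[n choose k]_q`, as a Laurent polynomial in `q`,
with the convention that it vanishes for `k < 0` or `k > n`.  Defined via the standard
Pascal-type recurrence `[n+1, k] = q^k [n, k] + [n, k-1]`. -/
noncomputable def qb : ℕ → ℤ → LaurentPolynomial ℤ
  | 0, k => if k = 0 then 1 else 0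
  | (n+1), k => T k * qb n k + qb n (k-1)

/-- The variable `q`. -/
noncomputable def q : LaurentPolynomial ℤ := T 1

/-- The Gaussian binomial coefficient in base `q²` (the paper's `\gaa`), i.e. the
Gaussian binomial coefficient with `q` replaced by `q²`, vanishing for `k < 0` or `k > n`. -/
noncomputable def qb2 : ℕ → ℤ → LaurentPolynomial ℤ
  | 0, k => if k = 0 then 1 else 0
  | (n+1), k => T (2 * k) * qb2 n k + qb2 n (k-1)

/-- `h n k = Σ_{j∈ℤ} q^{2j²−j} [⌊n/2⌋ choose k+j] [⌈n/2⌉ choose k+1−j]`, binomials in base `q²`. -/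
noncomputable def h (n : ℕ) (k : ℤ) : LaurentPolynomial ℤ :=
  ∑ᶠ j : ℤ, T (2 * j ^ 2 - j) * qb2 (n / 2) (k + j) * qb2 ((n + 1) / 2) (k + 1 - j)

lemma qb2_succ (n : ℕ) (k : ℤ) : qb2 (n+1) k = T (2*k) * qb2 n k + qb2 n (k-1) := rfl

lemma qb2_of_neg : ∀ (n : ℕ) {k : ℤ}, k < 0 → qb2 n k = 0
  | 0, k, hk => by simp only [qb2]; rw [if_neg (by omega)]
  | (n+1), k, hk => by
      rw [qb2_succ, qb2_of_neg n hk, qb2_of_neg n (show k-1 < 0 by omega)]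
      ring

lemma qb2_of_gt : ∀ (n : ℕ) {k : ℤ}, (n : ℤ) < k → qb2 n k = 0
  | 0, k, hk => by simp only [qb2]; rw [if_neg (by omega)]
  | (n+1), k, hk => by
      have hn : (n : ℤ) < k := by push_cast at hk; omega
      rw [qb2_succ, qb2_of_gt n hn, qb2_of_gt n (show (n:ℤ) < k - 1 by push_cast at hk; omega)]
      ring

/-- The general family of sums. -/
noncomputable def P (a b : ℕ) (c d k l : ℤ) : LaurentPolynomial ℤ :=
  ∑ᶠ j : ℤ, T (2 * j ^ 2 + c * j + d) * qb2 a (k + j) * qb2 b (l - j)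

lemma P_supp (a b : ℕ) (c d k l : ℤ) :
    (Function.support fun j : ℤ =>
      T (2 * j ^ 2 + c * j + d) * qb2 a (k + j) * qb2 b (l - j)).Finite := by
  apply Set.Finite.subset (Set.finite_Icc (-k) ((a : ℤ) - k))
  intro j hj
  simp only [Function.mem_support] at hj
  by_contra hmem
  apply hj
  simp only [Set.mem_Icc, not_and_or, not_le] at hmem
  rcases hmem with h1 | h1
  · rw [qb2_of_neg a (show k + j < 0 by omega)]; ring
  · rw [qb2_of_gt a (show (a:ℤ) < k + j by omega)]; ring

lemma h_eq_P (n : ℕ) (k : ℤ) : h n k = P (n/2) ((n+1)/2) (-1) 0 k (k+1) := by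
  unfold h P
  apply finsum_congr; intro j
  rw [show 2*j^2 + (-1)*j + 0 = 2*j^2 - j by ring]

lemma T_mul_P (t : ℤ) (a b : ℕ) (c d k l d' : ℤ) (hd : d' = t + d) :
    T t * P a b c d k l = P a b c d' k l := by
  subst hd
  unfold P
  rw [mul_finsum]
  apply finsum_congr; intro j
  rw [show 2*j^2 + c*j + (t + d) = t + (2*j^2 + c*j + d) by ring, T_add t (2*j^2 + c*j + d)]
  ring

lemma P_reflect (r : ℤ) (a b : ℕ) (c d k l c' d' k' l' : ℤ)
    (hc : c' = -4*r - c) (hd : d' = 2*r^2 + c*r + d) (hk : k' = l - r) (hl : l' = k + r) :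
    P a b c d k l = P b a c' d' k' l' := by
  subst hc hd hk hl
  unfold P
  rw [← finsum_comp_equiv (Equiv.subLeft r)]
  apply finsum_congr; intro j
  simp only [Equiv.subLeft_apply]
  rw [show k + (r - j) = (k + r) - j by ring, show l - (r - j) = (l - r) + j by ring,
    show 2*(r-j)^2 + c*(r-j) + d = 2*j^2 + (-4*r - c)*j + (2*r^2 + c*r + d) by ring]
  ring

lemma P_split (a b : ℕ) (c d k l c₁ d₁ l₂ : ℤ)
    (h1 : c₁ = c - 2) (h2 : d₁ = d + 2*l) (h3 : l₂ = l - 1) :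
    P a (b+1) c d k l = P a b c₁ d₁ k l + P a b c d k l₂ := by
  subst h1 h2 h3
  unfold P
  rw [← finsum_add_distrib (P_supp a b (c-2) (d+2*l) k l) (P_supp a b c d k (l-1))]
  apply finsum_congr; intro j
  rw [qb2_succ]
  rw [show l - 1 - j = l - j - 1 by ring,
    show 2*j^2 + (c-2)*j + (d + 2*l) = (2*(l - j)) + (2*j^2 + c*j + d) by ring, T_add (2*(l - j)) (2*j^2 + c*j + d)]
  ring

lemma key1 (x y : ℕ) (k : ℤ) :
    P x (y+1) (-1) 0 k (k+1) = T (2*k+1) * P y x (-1) 0 k (k+1) + P y x 1 0 k k := by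
  rw [P_split x y (-1) 0 k (k+1) (-3) (2*k+2) k (by ring) (by ring) (by ring),
    P_reflect 1 x y (-3) (2*k+2) k (k+1) (-1) (2*k+1) k (k+1)
      (by ring) (by ring) (by ring) (by ring),
    P_reflect 0 x y (-1) 0 k k 1 0 k k (by ring) (by ring) (by ring) (by ring),
    T_mul_P (2*k+1) y x (-1) 0 k (k+1) (2*k+1) (by ring)]

lemma key2 (x y : ℕ) (k : ℤ) :
    P x (y+1) 1 0 k k = T (2*k) * P y x 1 0 k k + P y x (-1) 0 (k-1) k := by
  rw [P_split x y 1 0 k k (-1) (2*k) (k-1) (by ring) (by ring) (by ring),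
    P_reflect 0 x y (-1) (2*k) k k 1 (2*k) k k (by ring) (by ring) (by ring) (by ring),
    P_reflect 0 x y 1 0 k (k-1) (-1) 0 (k-1) k (by ring) (by ring) (by ring) (by ring),
    T_mul_P (2*k) y x 1 0 k k (2*k) (by ring)]

lemma qb_succ (n : ℕ) (k : ℤ) : qb (n+1) k = T k * qb n k + qb n (k-1) := rfl

lemma main (n : ℕ) : (∀ k : ℤ, P (n/2) ((n+1)/2) (-1) 0 k (k+1) = qb n (2*k+1)) ∧
    (∀ k : ℤ, P (n/2) ((n+1)/2) 1 0 k k = qb n (2*k)) := by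
  induction n with
  | zero =>
    constructor
    · intro k
      have hz : ∀ j : ℤ,
          T (2*j^2 + (-1)*j + 0) * qb2 (0/2) (k + j) * qb2 ((0+1)/2) (k + 1 - j) = 0 := by
        intro j
        by_cases hj : k + j = 0
        · rw [show qb2 ((0+1)/2) (k+1-j) = 0 by
            show qb2 0 (k+1-j) = 0
            simp only [qb2]; rw [if_neg (by omega)]]
          ring
        · rw [show qb2 (0/2) (k+j) = 0 by
            show qb2 0 (k+j) = 0
            simp only [qb2]; rw [if_neg hj]]
          ring
      unfold P
      rw [finsum_congr hz, finsum_zero,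
        show qb 0 (2*k+1) = 0 by simp only [qb]; rw [if_neg (by omega)]]
    · intro k
      by_cases hk : k = 0
      · subst hk
        unfold P
        rw [finsum_eq_single _ (0:ℤ) (by
          intro x hx
          rw [show qb2 (0/2) (0 + x) = 0 by
            show qb2 0 (0 + x) = 0
            simp only [qb2]; rw [if_neg (by omega)]]
          ring)]
        norm_num [qb2, qb, T_zero]
      · have hz : ∀ j : ℤ,
            T (2*j^2 + 1*j + 0) * qb2 (0/2) (k + j) * qb2 ((0+1)/2) (k - j) = 0 := by
          intro j
          by_cases hj : k + j = 0
          · rw [show qb2 ((0+1)/2) (k-j) = 0 by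
              show qb2 0 (k-j) = 0
              simp only [qb2]; rw [if_neg (by omega)]]
            ring
          · rw [show qb2 (0/2) (k+j) = 0 by
              show qb2 0 (k+j) = 0
              simp only [qb2]; rw [if_neg hj]]
            ring
        unfold P
        rw [finsum_congr hz, finsum_zero,
          show qb 0 (2*k) = 0 by simp only [qb]; rw [if_neg (by omega)]]
  | succ n ih =>
    obtain ⟨I1, I2⟩ := ih
    have d2 : (n+1+1)/2 = n/2 + 1 := by omega
    constructor
    · intro k
      rw [d2, key1 ((n+1)/2) (n/2) k, I1 k, I2 k, qb_succ,
        show 2*k+1-1 = 2*k by ring]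
    · intro k
      have h1 := I1 (k-1)
      rw [show (k-1)+1 = k by ring] at h1
      rw [d2, key2 ((n+1)/2) (n/2) k, h1, I2 k, qb_succ,
        show 2*k-1 = 2*(k-1)+1 by ring]

theorem stmt19 (n : ℕ) (k : ℤ) : h n k = qb n (2 * k + 1) := by
  rw [h_eq_P]
  exact (main n).1 k
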